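/- Every infinite even-integer continued fraction converges: if b₁,b₂,… are even integers with bᵢ ≠ 0 for all i ≥ 2, then the sequence of convergents Tₙ(∞), where Tₙ = t₁∘⋯∘tₙ and tᵢ(z) = bᵢ + 1/z, converges in the extended real line ℝ ∪ {∞}. -/
import Mathlib


open Filter Topology OnePoint

/-- Inverse on ℚ ∪ {∞} (`Option.none` = ∞): 1/∞ = 0 and 1/0 = ∞. -/
def cfInv : Option ℚ → Option ℚ
  | Option.none => Option.some 0
  | Option.some q => if q = 0 then Option.none else Option.some q⁻¹

/-- Value of the finite continued fraction [b₁,…,bₙ] in ℚ ∪ {∞},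
with `cfVal [] = Option.none` (that is, ∞). -/
def cfVal : List ℤ → Option ℚ
  | [] => Option.none
  | b :: t => (cfInv (cfVal t)).map (fun q => (b : ℚ) + q)

/-- Embed ℚ ∪ {∞} into the extended real line ℝ ∪ {∞}. -/
def toOP : Option ℚ → OnePoint ℝ
  | Option.none => ∞
  | Option.some q => ((q : ℝ) : OnePoint ℝ)

/-- The n-th convergent (value of the first n+1 terms) of the continued fraction
with coefficients `b 0, b 1, …`. -/
def cfConv (b : ℕ → ℤ) (n : ℕ) : Option ℚ := cfVal ((List.range (n + 1)).map b)

/-- `b 0, b 1, …` is an even-integer continued fraction. -/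
def IsEICF (b : ℕ → ℤ) : Prop := (∀ i, Even (b i)) ∧ ∀ i ≥ 1, b i ≠ 0

/-- The even-integer continued fraction `b` is an expansion of `x`:
its convergents tend to `x` in the extended real line. -/
def IsEICFExpansion (b : ℕ → ℤ) (x : OnePoint ℝ) : Prop :=
  IsEICF b ∧ Tendsto (fun n => toOP (cfConv b n)) atTop (𝓝 x)


def cfP (b : ℕ → ℤ) : ℕ → ℤ
  | 0 => b 0
  | 1 => b 1 * b 0 + 1
  | (n+2) => b (n+2) * cfP b (n+1) + cfP b n

def cfQ (b : ℕ → ℤ) : ℕ → ℤ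
  | 0 => 1
  | 1 => b 1
  | (n+2) => b (n+2) * cfQ b (n+1) + cfQ b n

lemma cfConv_zero (b : ℕ → ℤ) : cfConv b 0 = Option.some ((b 0 : ℚ)) := by
  simp [cfConv, cfVal, cfInv]

lemma cfConv_succ (b : ℕ → ℤ) (n : ℕ) :
    cfConv b (n+1) = (cfInv (cfConv (fun i => b (i+1)) n)).map (fun q => (b 0 : ℚ) + q) := by
  rw [cfConv, List.range_succ_eq_map, List.map_cons, List.map_map, cfVal]
  rfl

lemma cfQ_shift (b : ℕ → ℤ) : ∀ n, cfQ b (n+1) = cfP (fun i => b (i+1)) n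
  | 0 => by simp [cfP, cfQ]
  | 1 => by simp [cfP, cfQ]
  | (n+2) => by
      show cfQ b ((n+1)+2) = _
      rw [cfQ, cfQ_shift b (n+1), cfQ_shift b n, cfP]

lemma cfP_shift (b : ℕ → ℤ) :
    ∀ n, cfP b (n+1) = b 0 * cfP (fun i => b (i+1)) n + cfQ (fun i => b (i+1)) n
  | 0 => by simp [cfP, cfQ]; ring
  | 1 => by simp [cfP, cfQ]; ring
  | (n+2) => by
      show cfP b ((n+1)+2) = _
      rw [cfP, cfP_shift b (n+1), cfP_shift b n]
      show _ = b 0 * (b (n+3) * cfP (fun i => b (i+1)) (n+1) + cfP (fun i => b (i+1)) n)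
        + (b (n+3) * cfQ (fun i => b (i+1)) (n+1) + cfQ (fun i => b (i+1)) n)
      ring

lemma cfDet (b : ℕ → ℤ) : ∀ n, cfP b n * cfQ b (n+1) - cfP b (n+1) * cfQ b n = (-1)^(n+1)
  | 0 => by simp [cfP, cfQ]; ring
  | (n+1) => by
      have h := cfDet b n
      show cfP b (n+1) * cfQ b (n+2) - cfP b (n+2) * cfQ b (n+1) = _
      rw [cfP, cfQ, pow_succ]
      linear_combination (-1 : ℤ) * h

lemma cfQ_growth (b : ℕ → ℤ) (hb : ∀ i ≥ 1, 2 ≤ |b i|) :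
    ∀ n : ℕ, ((n : ℤ) + 1 ≤ |cfQ b n|) ∧ |cfQ b n| + 1 ≤ |cfQ b (n+1)|
  | 0 => by
      refine ⟨by simp [cfQ], ?_⟩
      have h := hb 1 (by norm_num)
      have e0 : |cfQ b 0| = 1 := by simp [cfQ]
      have e1 : cfQ b 1 = b 1 := rfl
      rw [e0, e1]; linarith
  | (n+1) => by
      obtain ⟨h1, h2⟩ := cfQ_growth b hb n
      have hbn := hb (n+2) (by omega)
      have key : |cfQ b (n+1)| + 1 ≤ |cfQ b (n+2)| := by
        have e : cfQ b (n+2) = b (n+2) * cfQ b (n+1) + cfQ b n := rfl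
        have h3 : |b (n+2) * cfQ b (n+1)| ≤ |cfQ b (n+2)| + |cfQ b n| := by
          calc |b (n+2) * cfQ b (n+1)| = |cfQ b (n+2) + (- cfQ b n)| := by rw [e]; ring_nf
          _ ≤ |cfQ b (n+2)| + |(- cfQ b n)| := abs_add_le _ _
          _ = |cfQ b (n+2)| + |cfQ b n| := by rw [abs_neg]
        have h4 : |b (n+2) * cfQ b (n+1)| = |b (n+2)| * |cfQ b (n+1)| := abs_mul _ _
        nlinarith [abs_nonneg (cfQ b (n+1)), abs_nonneg (cfQ b n)]
      refine ⟨?_, key⟩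
      push_cast
      linarith

lemma cfConv_abs_gt_one : ∀ (n : ℕ) (b : ℕ → ℤ), (∀ i, 2 ≤ |b i|) →
    ∃ r : ℚ, cfConv b n = Option.some r ∧ 1 < |r|
  | 0, b, hb => by
      refine ⟨(b 0 : ℚ), cfConv_zero b, ?_⟩
      have := hb 0
      have : (2 : ℚ) ≤ |(b 0 : ℚ)| := by
        rw [← Int.cast_abs]; exact_mod_cast this
      linarith
  | (n+1), b, hb => by
      obtain ⟨r, hr, hr1⟩ := cfConv_abs_gt_one n (fun i => b (i+1)) (fun i => hb (i+1))
      have hrne : r ≠ 0 := by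
        intro h; rw [h] at hr1; norm_num at hr1
      refine ⟨(b 0 : ℚ) + r⁻¹, ?_, ?_⟩
      · rw [cfConv_succ, hr]; simp [cfInv, hrne]
      · have hinv : |r⁻¹| < 1 := by
          rw [abs_inv]
          rw [inv_lt_one_iff₀]
          right; exact hr1
        have hb0 : (2 : ℚ) ≤ |(b 0 : ℚ)| := by
          rw [← Int.cast_abs]; exact_mod_cast hb 0
        have := abs_add_le ((b 0 : ℚ) + r⁻¹) (-r⁻¹)
        simp only [add_neg_cancel_right, abs_neg] at this
        linarith

lemma cfConv_eq : ∀ (n : ℕ) (b : ℕ → ℤ), (∀ i ≥ 1, 2 ≤ |b i|) →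
    cfConv b n = Option.some ((cfP b n : ℚ) / (cfQ b n : ℚ))
  | 0, b, hb => by rw [cfConv_zero]; norm_num [cfP, cfQ]
  | (n+1), b, hb => by
      set b' : ℕ → ℤ := fun i => b (i+1) with hb'
      have hb'1 : ∀ i ≥ 1, 2 ≤ |b' i| := fun i _ => hb (i+1) (by omega)
      have hb'all : ∀ i, 2 ≤ |b' i| := fun i => hb (i+1) (by omega)
      have ih := cfConv_eq n b' hb'1
      obtain ⟨r, hr, hr1⟩ := cfConv_abs_gt_one n b' hb'all
      rw [ih] at hr
      have hrval : r = (cfP b' n : ℚ) / (cfQ b' n : ℚ) := by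
        exact (Option.some_injective _ hr).symm
      have hQ : ((n : ℤ) + 1 ≤ |cfQ b' n|) := (cfQ_growth b' hb'1 n).1
      have hQne : (cfQ b' n : ℚ) ≠ 0 := by
        have : cfQ b' n ≠ 0 := by
          intro h; rw [h] at hQ; simp at hQ; omega
        exact_mod_cast this
      have hrne : r ≠ 0 := by intro h; rw [h] at hr1; norm_num at hr1
      have hPne : (cfP b' n : ℚ) ≠ 0 := by
        intro h; rw [hrval, h] at hrne; simp at hrne
      rw [cfConv_succ, ih]
      simp only [cfInv]
      rw [if_neg (by rw [← hrval]; exact hrne)]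
      simp only [Option.map_some]
      congr 1
      rw [cfP_shift, cfQ_shift, ← hb']
      push_cast
      field_simp


/-- Every infinite even-integer continued fraction converges in the extended real line. -/
theorem eicf_infinite_converges (b : ℕ → ℤ) (heven : ∀ i, Even (b i))
    (hnz : ∀ i ≥ 1, b i ≠ 0) :
    ∃ x : OnePoint ℝ, Tendsto (fun n => toOP (cfConv b n)) atTop (𝓝 x) := by
  have hb : ∀ i ≥ 1, 2 ≤ |b i| := by
    intro i hi
    obtain ⟨k, hk⟩ := heven i
    have hne := hnz i hi
    rw [le_abs]
    omega
  have hconv := fun n => cfConv_eq n b hb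
  set y : ℕ → ℝ := fun n => (cfP b n : ℝ) / (cfQ b n : ℝ) with hy
  have hQ : ∀ n : ℕ, (n : ℤ) + 1 ≤ |cfQ b n| := fun n => (cfQ_growth b hb n).1
  have hQR : ∀ n : ℕ, (n : ℝ) + 1 ≤ |(cfQ b n : ℝ)| := by
    intro n
    rw [← Int.cast_abs]
    exact_mod_cast hQ n
  have hQne : ∀ n : ℕ, (cfQ b n : ℝ) ≠ 0 := by
    intro n h
    have h1 := hQR n
    rw [h, abs_zero] at h1
    have : (0:ℝ) ≤ (n:ℝ) := Nat.cast_nonneg n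
    linarith
  have hdist : ∀ n : ℕ, dist (y n) (y (n+1)) ≤ (1 : ℝ)/((n:ℝ)+1)^2 := by
    intro n
    rw [Real.dist_eq]
    have e : y n - y (n+1) = ((cfP b n * cfQ b (n+1) - cfP b (n+1) * cfQ b n : ℤ) : ℝ)
        / ((cfQ b n : ℝ) * (cfQ b (n+1) : ℝ)) := by
      simp only [hy]
      rw [div_sub_div _ _ (hQne n) (hQne (n+1))]
      push_cast
      congr 1
      ring
    rw [e, cfDet, abs_div, abs_mul]
    have hnum : |(((-1:ℤ)^(n+1) : ℤ) : ℝ)| = 1 := by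
      push_cast
      rw [abs_pow, abs_neg, abs_one, one_pow]
    rw [hnum]
    have h1 := hQR n
    have h2 : ((n:ℝ)+1) ≤ |(cfQ b (n+1) : ℝ)| := by
      have := hQR (n+1)
      push_cast at this
      linarith
    have hpos : (0:ℝ) < ((n:ℝ)+1)^2 := by positivity
    rw [div_le_div_iff₀ (by nlinarith) hpos]
    nlinarith
  have hsum : Summable (fun n : ℕ => (1:ℝ)/((n:ℝ)+1)^2) := by
    have h := Real.summable_one_div_nat_pow.mpr (by norm_num : 1 < 2)
    have h2 := (summable_nat_add_iff 1).mpr h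
    exact h2.congr (fun n => by push_cast; ring)
  have hcauchy := cauchySeq_of_dist_le_of_summable _ hdist hsum
  obtain ⟨x, hx⟩ := cauchySeq_tendsto_of_complete hcauchy
  refine ⟨(x : OnePoint ℝ), ?_⟩
  have heq : (fun n => toOP (cfConv b n)) = fun n => ((y n : ℝ) : OnePoint ℝ) := by
    funext n
    rw [hconv n]
    show ((((cfP b n : ℚ) / (cfQ b n : ℚ) : ℚ) : ℝ) : OnePoint ℝ) = _
    congr 1
    push_cast
    rfl
  rw [heq]
  exact (OnePoint.continuous_coe.tendsto x).comp hx
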